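/- Let p ≥ 3 be a prime and let A be an associative unital algebra over 𝔽_p = ZMod p. Suppose e, f, h ∈ A satisfy the sl₂ commutation relations h*e − e*h = 2·e, h*f − f*h = −2·f, e*f − f*e = h, together with the restricted relations e^p = 0, f^p = 0, h^p = h. Set δ = 4·f*e + (h+1)². Then δ^p − 2·δ^{(p+1)/2} + δ = 0. -/

import Mathlib

open Polynomial Finset

lemma zmod_prod (p : ℕ) [Fact p.Prime] :
    ∏ a : ZMod p, (X - C a) = (X : (ZMod p)[X]) ^ p - X := by
  have hp1 : 1 < p := (Fact.out : p.Prime).one_lt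
  have hq : Fintype.card (ZMod p) = p := ZMod.card p
  have hroots : ((X:(ZMod p)[X])^p - X).roots = Finset.univ.val := by
    have := FiniteField.roots_X_pow_card_sub_X (ZMod p)
    rwa [hq] at this
  have hmonic : ((X:(ZMod p)[X])^p - X).Monic := by
    apply (monic_X_pow p).sub_of_left
    rw [degree_X, degree_X_pow]
    exact_mod_cast hp1
  have hnd : ((X:(ZMod p)[X])^p - X).natDegree = p :=
    FiniteField.X_pow_card_sub_X_natDegree_eq _ hp1
  have hmain := prod_multiset_X_sub_C_of_monic_of_roots_card_eq hmonic
    (by rw [hroots, hnd]; simpa using hq)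
  rw [hroots] at hmain
  rw [← hmain, Finset.prod_eq_multiset_prod]

lemma prod_linear (p : ℕ) [Fact p.Prime] (T : Type*) [CommRing T] [Algebra (ZMod p) T] (s : T) :
    ∏ a : ZMod p, (s - algebraMap (ZMod p) T a) = s ^ p - s := by
  have h1 := congrArg (aeval s) (zmod_prod p)
  simpa [map_prod] using h1

lemma prod_linear' (p : ℕ) [Fact p.Prime] (T : Type*) [CommRing T] [Algebra (ZMod p) T] (s : T) :
    ∏ a : ZMod p, (s + algebraMap (ZMod p) T a) = s ^ p - s := by
  rw [← prod_linear p T s]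
  exact Fintype.prod_equiv (Equiv.neg (ZMod p)) _ _ (fun a => by simp [sub_neg_eq_add])

lemma key_comm (p : ℕ) [Fact p.Prime] (hp3 : 3 ≤ p)
    (S : Type*) [CommRing S] [Algebra (ZMod p) S] [Nontrivial S] (u t : S) :
    ∏ c : ZMod p, (u - (t + algebraMap (ZMod p) S c) ^ 2)
      = u ^ p - 2 * u ^ ((p + 1) / 2) + u - (t ^ p - t) ^ 2 := by
  have hp : p.Prime := Fact.out
  have hodd : p % 2 = 1 := Nat.odd_iff.mp (hp.odd_of_ne_two (by omega))
  set k := (p - 1) / 2 with hk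
  have hp2 : p = 2 * k + 1 := by omega
  have hhalf : (p + 1) / 2 = k + 1 := by omega
  set g : S[X] := X ^ 2 - C u with hg_def
  have hm : g.Monic := monic_X_pow_sub_C u two_ne_zero
  have hdeg : g.degree = 2 := degree_X_pow_sub_C (by norm_num) u
  set S' := AdjoinRoot g with hS'
  have hmod : ∀ c : S, AdjoinRoot.modByMonicHom hm (algebraMap S S' c) = C c := by
    intro c
    rw [AdjoinRoot.algebraMap_eq, AdjoinRoot.of, RingHom.comp_apply,
      AdjoinRoot.modByMonicHom_mk]
    exact (modByMonic_eq_self_iff hm).mpr (lt_of_le_of_lt degree_C_le (by rw [hdeg]; norm_num))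
  have hinj : Function.Injective (algebraMap S S') := by
    intro a b hab
    have h2 := congrArg (AdjoinRoot.modByMonicHom hm) hab
    rw [hmod, hmod] at h2
    exact C_injective h2
  haveI : Nontrivial S' :=
    ⟨algebraMap S S' 0, algebraMap S S' 1, fun h01 => zero_ne_one (hinj h01)⟩
  haveI : CharP S' p :=
    charP_of_injective_ringHom
      (f := (algebraMap S S').comp (algebraMap (ZMod p) S))
      (hinj.comp (algebraMap (ZMod p) S).injective) p
  apply hinj
  rw [map_prod]
  set x : S' := AdjoinRoot.root g with hx_def
  set u' : S' := algebraMap S S' u with hu'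
  set t' : S' := algebraMap S S' t with ht'
  have hx : x ^ 2 = u' := by
    have h0 : AdjoinRoot.mk g g = 0 := AdjoinRoot.mk_self
    rw [hg_def, map_sub, map_pow, AdjoinRoot.mk_X, AdjoinRoot.mk_C, sub_eq_zero] at h0
    rw [hu', AdjoinRoot.algebraMap_eq]
    exact h0
  have hcomp : ∀ c : ZMod p,
      algebraMap S S' (algebraMap (ZMod p) S c) = algebraMap (ZMod p) S' c := fun c =>
    RingHom.congr_fun
      (Subsingleton.elim ((algebraMap S S').comp (algebraMap (ZMod p) S))
        (algebraMap (ZMod p) S')) c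
  have hxp : x ^ p = u' ^ k * x := by
    rw [hp2, pow_succ, pow_mul, hx]
  calc ∏ c : ZMod p, algebraMap S S' (u - (t + algebraMap (ZMod p) S c) ^ 2)
      = ∏ c : ZMod p, ((x - t' - algebraMap (ZMod p) S' c)
          * (x + t' + algebraMap (ZMod p) S' c)) := by
        refine Finset.prod_congr rfl fun c _ => ?_
        rw [map_sub, map_pow, map_add, hcomp]
        linear_combination -hx
    _ = ((x - t') ^ p - (x - t')) * ((x + t') ^ p - (x + t')) := by
        rw [Finset.prod_mul_distrib, prod_linear, prod_linear']
    _ = ((u' ^ k - 1) ^ 2) * u' - (t' ^ p - t') ^ 2 := by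
        rw [sub_pow_char, add_pow_char, hxp]
        linear_combination (u' ^ k - 1) ^ 2 * hx
    _ = u' ^ p - 2 * u' ^ ((p + 1) / 2) + u' - (t' ^ p - t') ^ 2 := by
        rw [hhalf, hp2]
        ring
    _ = algebraMap S S' (u ^ p - 2 * u ^ ((p + 1) / 2) + u - (t ^ p - t) ^ 2) := by
        push_cast [map_add, map_sub, map_mul, map_pow, map_ofNat]
        ring

lemma reindex2 (p : ℕ) [Fact p.Prime] (hp3 : 3 ≤ p)
    (T : Type*) [CommRing T] [Algebra (ZMod p) T] (u t : T) :
    ∏ c : ZMod p, (u - (t + algebraMap (ZMod p) T c) ^ 2)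
      = ∏ j ∈ Finset.range p, (u - (t + ((2 * j : ℕ) : T)) ^ 2) := by
  haveI : NeZero p := ⟨(Fact.out : p.Prime).ne_zero⟩
  have h2ne : (2 : ZMod p) ≠ 0 := by
    have h2 : ((2 : ℕ) : ZMod p) ≠ 0 := by
      rw [Ne, ZMod.natCast_eq_zero_iff]
      intro hdvd
      exact absurd (Nat.le_of_dvd two_pos hdvd) (by omega)
    simpa using h2
  refine (Finset.prod_bij (fun j _ => ((2 * j : ℕ) : ZMod p)) (fun j _ => mem_univ _)
    ?_ ?_ ?_).symm
  · intro j1 h1 j2 h2 heq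
    push_cast at heq
    have := mul_left_cancel₀ h2ne heq
    rw [← ZMod.val_cast_of_lt (mem_range.mp h1), ← ZMod.val_cast_of_lt (mem_range.mp h2), this]
  · intro c _
    refine ⟨(c * (2 : ZMod p)⁻¹).val, mem_range.mpr (ZMod.val_lt _), ?_⟩
    push_cast
    rw [ZMod.natCast_val, ZMod.cast_id]
    field_simp
  · intro j _
    rw [map_natCast]

/-- For `p ≥ 3` prime and an `𝔽_p`-algebra `A` with a restricted sl₂-triple
`(e, f, h)`, the Casimir `δ = 4fe + (h+1)²` satisfies `δ^p − 2δ^{(p+1)/2} + δ = 0`. -/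
theorem stmt8 (p : ℕ) (hp : p.Prime) (hp3 : 3 ≤ p)
    (A : Type*) [Ring A] [Algebra (ZMod p) A]
    (e f h : A)
    (rel1 : h * e - e * h = 2 * e)
    (rel2 : h * f - f * h = -2 * f)
    (rel3 : e * f - f * e = h)
    (re : e ^ p = 0) (rf : f ^ p = 0) (rh : h ^ p = h)
    (δ : A) (hδ : δ = 4 * (f * e) + (h + 1) ^ 2) :
    δ ^ p - 2 * δ ^ ((p + 1) / 2) + δ = 0 := by
  rcases subsingleton_or_nontrivial A with hA | hA
  · exact Subsingleton.elim _ _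
  haveI : Fact p.Prime := ⟨hp⟩
  haveI : CharP A p := charP_of_injective_algebraMap' (A := A) (ZMod p) p
  have c_δe : δ * e = e * δ := by
    linear_combination (norm := noncomm_ring) hδ * e - e * hδ - 4*rel3*e - 2*rel1
      + (h+1)*rel1 + rel1*(h+1)
  have c_δt : δ * (h+1) = (h+1) * δ := by
    linear_combination (norm := noncomm_ring) hδ * (h+1) - (h+1) * hδ - 4 * rel2 * e - 4 * f * rel1
  have c_et : e * (h+1) = ((h+1) - 2) * e := by
    linear_combination (norm := noncomm_ring) -rel1
  have htp : (h+1) ^ p = h+1 := by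
    have h1 := add_pow_char_of_commute p (Commute.one_right h)
    rw [h1, rh, one_pow]
  set t : A := h + 1 with ht_def
  -- shift and telescoping lemmas
  have hek : ∀ k : ℕ, e ^ k * (t + 2 * (k:A)) = t * e ^ k := by
    intro k
    induction k with
    | zero => simp
    | succ n ih =>
      have h1 : e ^ (n+1) * (t + 2 * ((n:A)+1))
          = e * (e ^ n * (t + 2*(n:A))) + 2 * e ^ (n+1) := by
        rw [pow_succ']; noncomm_ring
      push_cast
      rw [h1, ih, ← mul_assoc, c_et, pow_succ']
      noncomm_ring
  have keyk : ∀ k : ℕ, e ^ k * (δ - (t + 2*(k:A))^2) = (4*(f*e)) * e ^ k := by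
    intro k
    have h1 : δ * e ^ k = e ^ k * δ := (Commute.pow_right c_δe k)
    have h2 : e ^ k * (t + 2*(k:A))^2 = t^2 * e ^ k := by
      rw [sq, ← mul_assoc, hek k, mul_assoc, hek k, ← mul_assoc, ← sq]
    calc e ^ k * (δ - (t + 2*(k:A))^2)
        = e ^ k * δ - e ^ k * (t + 2*(k:A))^2 := by noncomm_ring
      _ = δ * e ^ k - t^2 * e ^ k := by rw [← h1, h2]
      _ = (4*(f*e)) * e ^ k := by
          linear_combination (norm := noncomm_ring) hδ * e ^ k
  -- evaluation homomorphism from (ZMod p)[Y][X]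
  have hc : ∀ q : Polynomial (ZMod p), Commute (Polynomial.aeval t q) δ := by
    intro q
    induction q using Polynomial.induction_on with
    | C c => simpa using (show Commute (algebraMap (ZMod p) A c) δ from Algebra.commutes c δ)
    | add q r hq hr => simp only [map_add]; exact hq.add_left hr
    | monomial n c ih =>
      simp only [map_mul, map_pow, Polynomial.aeval_C, Polynomial.aeval_X]
      exact (show Commute (algebraMap (ZMod p) A c) δ from Algebra.commutes c δ).mul_left
        ((show Commute t δ from c_δt.symm).pow_left (n+1))
  set φ : Polynomial (Polynomial (ZMod p)) →ₐ[ZMod p] A :=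
    Polynomial.eval₂AlgHom (Polynomial.aeval t) δ hc with hφ
  have hφu : φ X = δ := by rw [hφ]; simp [Polynomial.eval₂AlgHom_apply]
  have hφt : φ (C X) = t := by rw [hφ]; simp [Polynomial.eval₂AlgHom_apply]
  -- the identity in the commutative polynomial ring
  have hRid : ∏ j ∈ Finset.range p,
        ((X : Polynomial (Polynomial (ZMod p))) - (C X + ((2 * j : ℕ) : Polynomial (Polynomial (ZMod p)))) ^ 2)
      = X ^ p - 2 * X ^ ((p + 1) / 2) + X - ((C X) ^ p - C X) ^ 2 :=
    (reindex2 p hp3 (Polynomial (Polynomial (ZMod p))) X (C X)).symm.trans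
      (key_comm p hp3 (Polynomial (Polynomial (ZMod p))) X (C X))
  have happ := congrArg φ hRid
  -- step A : φ of partial products telescopes
  have stepA : ∀ k : ℕ,
      φ (∏ j ∈ Finset.range k,
        ((X : Polynomial (Polynomial (ZMod p))) - (C X + ((2 * j : ℕ) : Polynomial (Polynomial (ZMod p)))) ^ 2))
        = 4 ^ k * (f ^ k * e ^ k) := by
    intro k
    induction k with
    | zero =>
      rw [Finset.prod_range_zero, map_one]
      norm_num
    | succ n ih =>
      rw [Finset.prod_range_succ, map_mul, ih]
      have hfac : φ ((X : Polynomial (Polynomial (ZMod p))) - (C X + ((2 * n : ℕ) : Polynomial (Polynomial (ZMod p)))) ^ 2)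
          = δ - (t + 2 * (n:A)) ^ 2 := by
        rw [map_sub, map_pow, map_add, map_natCast, hφu, hφt]
        push_cast
        ring_nf
      rw [hfac]
      calc (4 ^ n * (f ^ n * e ^ n)) * (δ - (t + 2 * (n : A)) ^ 2)
          = 4 ^ n * (f ^ n * (e ^ n * (δ - (t + 2 * (n : A)) ^ 2))) := by
            rw [mul_assoc, mul_assoc]
        _ = 4 ^ n * (f ^ n * ((4 * (f * e)) * e ^ n)) := by rw [keyk n]
        _ = 4 ^ (n + 1) * (f ^ (n + 1) * e ^ (n + 1)) := by
            rw [pow_succ (4 : A), pow_succ f, pow_succ' e]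
            noncomm_ring
  rw [stepA p, rf] at happ
  simp only [map_sub, map_add, map_mul, map_pow, map_ofNat, hφu, hφt] at happ
  rw [htp] at happ
  have h0 : (0 : A) = δ ^ p - 2 * δ ^ ((p + 1) / 2) + δ := by
    simpa using happ
  exact h0.symm
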